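/- Let m ≥ 5 and let T be a finite tree (a finite connected acyclic simple graph) with at least one vertex. If the alternating group A_m on m letters acts faithfully on T by graph automorphisms (equivalently, if there is an injective group homomorphism from A_m into the automorphism group of T), then T has a vertex of degree at least m. -/

import Mathlib

set_option linter.unusedSectionVars false
set_option linter.unusedVariables false
set_option maxHeartbeats 1000000

open Equiv Equiv.Perm Subgroup

namespace AltAux

variable {α : Type*} [Fintype α] [DecidableEq α]

lemma class5 {f : Perm α} (h1 : f ≠ 1) (hs : Perm.sign f = 1) (hc : f.support.card ≤ 5) :
    f.cycleType = {3} ∨ f.cycleType = ({2, 2} : Multiset ℕ) ∨ f.cycleType = {5} := by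
  have hsum : f.cycleType.sum ≤ 5 := by rw [Equiv.Perm.sum_cycleType]; exact hc
  have hsign := Equiv.Perm.sign_of_cycleType f
  rw [hs] at hsign
  have heven : (f.cycleType.sum + Multiset.card f.cycleType) % 2 = 0 := by
    rw [← Nat.even_iff]
    rwa [eq_comm, neg_one_pow_eq_one_iff_even (by decide : (-1 : ℤˣ) ≠ 1)] at hsign
  have hcard2 : Multiset.card f.cycleType ≤ 2 := by
    by_contra hgt
    push_neg at hgt
    have h2 : Multiset.card f.cycleType • 2 ≤ f.cycleType.sum :=
      Multiset.card_nsmul_le_sum (fun x hx => Equiv.Perm.two_le_of_mem_cycleType hx)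
    simp only [smul_eq_mul] at h2
    omega
  interval_cases hm : Multiset.card f.cycleType
  · exact absurd (Equiv.Perm.card_cycleType_eq_zero.mp hm) h1
  · obtain ⟨n, hn⟩ := Multiset.card_eq_one.mp hm
    have hn2 : 2 ≤ n :=
      Equiv.Perm.two_le_of_mem_cycleType (σ := f) (by rw [hn]; exact Multiset.mem_singleton_self n)
    rw [hn] at hsum heven ⊢
    simp only [Multiset.sum_singleton, Multiset.card_singleton] at hsum heven
    have : n = 3 ∨ n = 5 := by omega
    rcases this with rfl | rfl
    · exact Or.inl rfl
    · exact Or.inr (Or.inr rfl)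
  · obtain ⟨x, y, hxy⟩ := Multiset.card_eq_two.mp hm
    have hx2 : 2 ≤ x :=
      Equiv.Perm.two_le_of_mem_cycleType (σ := f) (by rw [hxy]; exact Multiset.mem_cons_self _ _)
    have hy2 : 2 ≤ y := Equiv.Perm.two_le_of_mem_cycleType (σ := f)
      (by rw [hxy]; exact Multiset.mem_cons_of_mem (Multiset.mem_singleton_self y))
    rw [hxy] at hsum heven ⊢
    have hsum' : x + y ≤ 5 := by simpa using hsum
    have heven' : (x + y + 2) % 2 = 0 := by
      simpa [Multiset.sum_cons, Multiset.card_cons] using heven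
    have hx : x = 2 := by omega
    have hy : y = 2 := by omega
    subst hx; subst hy
    exact Or.inr (Or.inl rfl)

lemma small3 {f : Perm α} (h1 : f ≠ 1) (hs : Perm.sign f = 1) (hc : f.support.card ≤ 3) :
    f.IsThreeCycle := by
  rcases class5 h1 hs (hc.trans (by norm_num)) with h | h | h
  · exact h
  · exfalso
    have := Equiv.Perm.sum_cycleType f
    rw [h] at this
    simp at this
    omega
  · exfalso
    have := Equiv.Perm.sum_cycleType f
    rw [h] at this
    simp at this
    omega


/-- the 3-cycle sending `x → y → z → x`. -/
def cyc (x y z : α) : Perm α := Equiv.swap x z * Equiv.swap x y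

variable {x y z w : α}

lemma cyc_isThreeCycle (hxy : x ≠ y) (hxz : x ≠ z) (hyz : y ≠ z) :
    IsThreeCycle (cyc x y z) :=
  isThreeCycle_swap_mul_swap_same hxz hxy (Ne.symm hyz)

lemma cyc_fst (hxy : x ≠ y) (hyz : y ≠ z) : cyc x y z x = y := by
  simp only [cyc, Perm.mul_apply, Equiv.swap_apply_left]
  exact Equiv.swap_apply_of_ne_of_ne (Ne.symm hxy) hyz

lemma cyc_snd : cyc x y z y = z := by
  simp only [cyc, Perm.mul_apply, Equiv.swap_apply_right, Equiv.swap_apply_left]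

lemma cyc_trd (hxz : x ≠ z) (hyz : y ≠ z) : cyc x y z z = x := by
  simp only [cyc, Perm.mul_apply]
  rw [Equiv.swap_apply_of_ne_of_ne (Ne.symm hxz) (Ne.symm hyz), Equiv.swap_apply_right]

lemma cyc_fix (hx : w ≠ x) (hy : w ≠ y) (hz : w ≠ z) : cyc x y z w = w := by
  simp only [cyc, Perm.mul_apply]
  rw [Equiv.swap_apply_of_ne_of_ne hx hy, Equiv.swap_apply_of_ne_of_ne hx hz]

lemma cyc_support : (cyc x y z).support ⊆ {x, y, z} := by
  intro a ha
  rw [Perm.mem_support] at ha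
  simp only [Finset.mem_insert, Finset.mem_singleton]
  by_contra hc
  push_neg at hc
  exact ha (cyc_fix hc.1 hc.2.1 hc.2.2)

lemma cyc_inv_fst (hxy : x ≠ y) (hyz : y ≠ z) : (cyc x y z)⁻¹ y = x :=
  (cyc x y z).injective (by rw [Perm.coe_inv, Equiv.apply_symm_apply, cyc_fst hxy hyz])

lemma cyc_inv_snd : (cyc x y z)⁻¹ z = y :=
  (cyc x y z).injective (by rw [Perm.coe_inv, Equiv.apply_symm_apply, cyc_snd])

lemma cyc_inv_trd (hxz : x ≠ z) (hyz : y ≠ z) : (cyc x y z)⁻¹ x = z :=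
  (cyc x y z).injective (by rw [Perm.coe_inv, Equiv.apply_symm_apply, cyc_trd hxz hyz])

lemma cyc_inv_fix (hx : w ≠ x) (hy : w ≠ y) (hz : w ≠ z) : (cyc x y z)⁻¹ w = w :=
  (cyc x y z).injective (by rw [Perm.coe_inv, Equiv.apply_symm_apply, cyc_fix hx hy hz])


lemma case22 (h5 : 5 ≤ Fintype.card α) (N : Subgroup (Perm α)) (hNA : N ≤ alternatingGroup α)
    (hN : ∀ τ, τ ∈ alternatingGroup α → ∀ f ∈ N, τ * f * τ⁻¹ ∈ N)
    {h : Perm α} (hh : h ∈ N) (hct : h.cycleType = ({2, 2} : Multiset ℕ)) :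
    ∃ f ∈ N, IsThreeCycle f := by
  have h1 : h ≠ 1 := by
    intro he; rw [he, Equiv.Perm.cycleType_one] at hct; simp at hct
  have hord : orderOf h = 2 := by
    have := Equiv.Perm.lcm_cycleType h
    rw [hct] at this
    simpa using this.symm
  have hsq : ∀ x, h (h x) = x := by
    intro x
    have : h ^ 2 = 1 := by rw [← hord]; exact pow_orderOf_eq_one h
    have := congrFun (congrArg (fun f : Perm α => (f : α → α)) this) x
    simpa [pow_succ, Perm.mul_apply] using this
  have hcard : h.support.card = 4 := by
    have := Equiv.Perm.sum_cycleType h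
    rw [hct] at this
    simpa using this.symm
  obtain ⟨a, ha⟩ : ∃ a, h a ≠ a := by
    by_contra hc; push_neg at hc; exact h1 (Equiv.ext fun x => by simp [hc x])
  set b := h a with hb
  have hba : h b = a := hsq a
  have hab : a ≠ b := fun he => ha he.symm
  obtain ⟨c, hc⟩ : ∃ c, c ∈ h.support \ ({a, b} : Finset α) := by
    have h2 : ({a, b} : Finset α).card ≤ 2 := (Finset.card_insert_le _ _).trans (by simp)
    have hle := Finset.le_card_sdiff ({a, b} : Finset α) h.support
    have hpos : 0 < (h.support \ ({a, b} : Finset α)).card := by omega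
    obtain ⟨c, hc⟩ := Finset.card_pos.mp hpos
    exact ⟨c, hc⟩
  rw [Finset.mem_sdiff, Finset.mem_insert, Finset.mem_singleton, Perm.mem_support] at hc
  obtain ⟨hcsupp, hcab⟩ := hc
  push_neg at hcab
  obtain ⟨hca, hcb⟩ := hcab
  set d := h c with hd
  have hdc : h d = c := hsq c
  have hcd : c ≠ d := fun he => hcsupp he.symm
  have hda : d ≠ a := by
    intro he
    apply hcb
    rw [← hdc, he, ← hb]
  have hdb : d ≠ b := by
    intro he
    apply hca
    rw [← hdc, he, hba]
  obtain ⟨e, he⟩ : ∃ e, e ∉ ({a, b, c, d} : Finset α) := by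
    by_contra hce
    push_neg at hce
    have hsub : (Finset.univ : Finset α) ⊆ {a, b, c, d} := fun x _ => hce x
    have hcard4 : ({a, b, c, d} : Finset α).card ≤ 4 := by
      refine (Finset.card_insert_le _ _).trans (Nat.succ_le_succ ?_)
      refine (Finset.card_insert_le _ _).trans (Nat.succ_le_succ ?_)
      exact (Finset.card_insert_le _ _).trans (by simp)
    have := Finset.card_le_card hsub
    rw [Finset.card_univ] at this
    omega
  simp only [Finset.mem_insert, Finset.mem_singleton, not_or] at he
  obtain ⟨hea, heb, hec, hed⟩ := he
  set σ := cyc c d e with hσ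
  have hσ3 : IsThreeCycle σ := cyc_isThreeCycle hcd (Ne.symm hec) (Ne.symm hed)
  set h' := σ * h * σ⁻¹ * h with hh'
  have hh'N : h' ∈ N := mul_mem (hN σ hσ3.mem_alternatingGroup h hh) hh
  -- applications
  have happ : ∀ x, h' x = σ (h (σ⁻¹ (h x))) := fun x => by
    simp [hh', Perm.mul_apply]
  have h'a : h' a = a := by
    rw [happ, ← hb, cyc_inv_fix (Ne.symm hcb) (Ne.symm hdb) (Ne.symm heb), hba,
      cyc_fix (Ne.symm hca) (Ne.symm hda) (Ne.symm hea)]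
  have h'b : h' b = b := by
    rw [happ, hba, cyc_inv_fix (Ne.symm hca) (Ne.symm hda) (Ne.symm hea), ← hb,
      cyc_fix (Ne.symm hcb) (Ne.symm hdb) (Ne.symm heb)]
  have h'c : h' c = e := by
    rw [happ, ← hd, cyc_inv_fst hcd (Ne.symm hed), ← hd, cyc_snd]
  -- support of h
  have hsupp : h.support = {a, b, c, d} := by
    refine (Finset.eq_of_subset_of_card_le ?_ ?_).symm
    · intro x hx
      simp only [Finset.mem_insert, Finset.mem_singleton] at hx
      rcases hx with rfl | rfl | rfl | rfl
      · exact Perm.mem_support.mpr ha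
      · exact Perm.mem_support.mpr (by rw [hba]; exact fun he => hab he)
      · exact Perm.mem_support.mpr hcsupp
      · exact Perm.mem_support.mpr (by rw [hdc]; exact fun he => hcd he)
    · have : ({a, b, c, d} : Finset α).card = 4 := by
        rw [Finset.card_insert_of_notMem (by simp [hab, Ne.symm hca, Ne.symm hda]),
          Finset.card_insert_of_notMem (by simp [Ne.symm hcb, Ne.symm hdb]),
          Finset.card_insert_of_notMem (by simp [hcd]), Finset.card_singleton]
      omega
  -- support of h'
  have hsub : h'.support ⊆ ({c, d, e} : Finset α) := by
    intro x hx
    have hx5 : x ∈ ({a, b, c, d, e} : Finset α) := by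
      have h2 : h'.support ⊆ (σ * h * σ⁻¹).support ∪ h.support := by
        rw [hh']
        intro y hy
        have := Perm.support_mul_le (σ * h * σ⁻¹) h hy
        rwa [Finset.sup_eq_union] at this
      rcases Finset.mem_union.mp (h2 hx) with hx1 | hx1
      · rw [Perm.support_conj] at hx1
        obtain ⟨y, hy, rfl⟩ := Finset.mem_map.mp hx1
        rw [hsupp] at hy
        simp only [Finset.mem_insert, Finset.mem_singleton] at hy ⊢
        simp only [Equiv.toEmbedding_apply]
        rcases hy with rfl | rfl | rfl | rfl
        · rw [cyc_fix (Ne.symm hca) (Ne.symm hda) (Ne.symm hea)]; tauto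
        · rw [cyc_fix (Ne.symm hcb) (Ne.symm hdb) (Ne.symm heb)]; tauto
        · rw [cyc_fst hcd (Ne.symm hed)]; tauto
        · rw [cyc_snd]; tauto
      · rw [hsupp] at hx1
        simp only [Finset.mem_insert, Finset.mem_singleton] at hx1 ⊢
        tauto
    have hxa : x ≠ a := fun hxe => Perm.mem_support.mp hx (by rw [hxe, h'a])
    have hxb : x ≠ b := fun hxe => Perm.mem_support.mp hx (by rw [hxe, h'b])
    simp only [Finset.mem_insert, Finset.mem_singleton] at hx5 ⊢
    tauto
  have hcard3 : h'.support.card ≤ 3 := by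
    calc h'.support.card ≤ ({c, d, e} : Finset α).card := Finset.card_le_card hsub
      _ ≤ 3 := by
        refine (Finset.card_insert_le _ _).trans (Nat.succ_le_succ ?_)
        exact (Finset.card_insert_le _ _).trans (by simp)
  have h'1 : h' ≠ 1 := by
    intro heq
    rw [heq] at h'c
    simp only [Perm.one_apply] at h'c
    exact hec h'c.symm
  exact ⟨h', hh'N, small3 h'1 ((mem_alternatingGroup).mp (hNA hh'N)) hcard3⟩


lemma case5 (h5 : 5 ≤ Fintype.card α) (N : Subgroup (Perm α)) (hNA : N ≤ alternatingGroup α)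
    (hN : ∀ τ, τ ∈ alternatingGroup α → ∀ f ∈ N, τ * f * τ⁻¹ ∈ N)
    {h : Perm α} (hh : h ∈ N) (hct : h.cycleType = {5}) :
    ∃ f ∈ N, IsThreeCycle f := by
  have h1 : h ≠ 1 := by
    intro he; rw [he, Equiv.Perm.cycleType_one] at hct; simp at hct
  have hord5 : h ^ 5 = 1 := by
    have := Equiv.Perm.lcm_cycleType h
    rw [hct] at this
    simp only [Multiset.lcm_singleton, normalize_eq] at this
    rw [this]
    exact pow_orderOf_eq_one h
  have hcard : h.support.card = 5 := by
    have := Equiv.Perm.sum_cycleType h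
    rw [hct] at this
    simpa using this.symm
  obtain ⟨a, ha⟩ : ∃ a, h a ≠ a := by
    by_contra hc; push_neg at hc; exact h1 (Equiv.ext fun x => by simp [hc x])
  set p : ℕ → α := fun i => (h ^ i) a with hp
  have hp0 : p 0 = a := by simp [hp]
  have hpsucc : ∀ i, h (p i) = p (i + 1) := by
    intro i
    simp only [hp, pow_succ', Perm.mul_apply]
  have hp5 : p 5 = a := by simp [hp, hord5]
  -- key lemma : no early return
  have main : ∀ k u q : ℕ, k * u = 5 * q + 1 → (h ^ k) a = a → h a = a := by
    intro k u q hq hk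
    have hit : ∀ n : ℕ, ((h ^ k) ^ n) a = a := by
      intro n
      induction n with
      | zero => simp
      | succ n ih => rw [pow_succ, Perm.mul_apply, hk, ih]
    have hku : h ^ (k * u) = h := by
      rw [hq, pow_add, pow_mul, hord5, one_pow, one_mul, pow_one]
    calc h a = (h ^ (k * u)) a := by rw [hku]
      _ = ((h ^ k) ^ u) a := by rw [pow_mul]
      _ = a := hit u
  have key : ∀ k, 1 ≤ k → k ≤ 4 → (h ^ k) a ≠ a := by
    intro k hk1 hk4 hk
    apply ha
    interval_cases k
    · exact main 1 1 0 (by norm_num) hk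
    · exact main 2 3 1 (by norm_num) hk
    · exact main 3 2 1 (by norm_num) hk
    · exact main 4 4 3 (by norm_num) hk
  have dist : ∀ i j, i < j → j ≤ 4 → p i ≠ p j := by
    intro i j hij hj4 hx
    apply key (j - i) (by omega) (by omega)
    have h1' : (h ^ i) ((h ^ (j - i)) a) = (h ^ i) a := by
      rw [← Perm.mul_apply, ← pow_add, show i + (j - i) = j by omega]
      exact hx.symm
    exact (h ^ i).injective h1'
  -- inverse facts
  have hinv : ∀ i, h⁻¹ (p (i + 1)) = p i := fun i =>
    h.injective (by rw [Perm.coe_inv, Equiv.apply_symm_apply, hpsucc])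
  have hinv0 : h⁻¹ (p 0) = p 4 := h.injective (by
    rw [Perm.coe_inv, Equiv.apply_symm_apply, hpsucc, hp5, hp0])
  -- tau
  set τ := cyc (p 0) (p 1) (p 2) with hτ
  have hτ3 : IsThreeCycle τ :=
    cyc_isThreeCycle (dist 0 1 (by omega) (by omega)) (dist 0 2 (by omega) (by omega))
      (dist 1 2 (by omega) (by omega))
  set h' := τ * h * τ⁻¹ * h⁻¹ with hh'
  have hh'N : h' ∈ N := mul_mem (hN τ hτ3.mem_alternatingGroup h hh) (inv_mem hh)
  have happ : ∀ x, h' x = τ (h (τ⁻¹ (h⁻¹ x))) := fun x => by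
    simp [hh', Perm.mul_apply]
  have ne40 : p 4 ≠ p 0 := (dist 0 4 (by omega) (by omega)).symm
  have ne41 : p 4 ≠ p 1 := (dist 1 4 (by omega) (by omega)).symm
  have ne42 : p 4 ≠ p 2 := (dist 2 4 (by omega) (by omega)).symm
  have ne30 : p 3 ≠ p 0 := (dist 0 3 (by omega) (by omega)).symm
  have ne31 : p 3 ≠ p 1 := (dist 1 3 (by omega) (by omega)).symm
  have ne32 : p 3 ≠ p 2 := (dist 2 3 (by omega) (by omega)).symm
  have h'0 : h' (p 0) = p 1 := by
    rw [happ, hinv0, cyc_inv_fix ne40 ne41 ne42, hpsucc, hp5, ← hp0,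
      cyc_fst (dist 0 1 (by omega) (by omega)) (dist 1 2 (by omega) (by omega))]
  have h'2 : h' (p 2) = p 2 := by
    rw [happ, hinv 1, cyc_inv_fst (dist 0 1 (by omega) (by omega)) (dist 1 2 (by omega) (by omega)),
      hpsucc, cyc_snd]
  have h'4 : h' (p 4) = p 4 := by
    rw [happ, hinv 3, cyc_inv_fix ne30 ne31 ne32, hpsucc,
      cyc_fix ne40 ne41 ne42]
  -- support of h
  have hm : ∀ i, i ≤ 4 → p i ∈ h.support := by
    intro i hi
    rw [Perm.mem_support, hpsucc]
    interval_cases i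
    · exact (dist 0 1 (by omega) (by omega)).symm
    · exact (dist 1 2 (by omega) (by omega)).symm
    · exact (dist 2 3 (by omega) (by omega)).symm
    · exact (dist 3 4 (by omega) (by omega)).symm
    · rw [hp5, ← hp0]; exact fun q => ne40 q.symm
  have hsupp : h.support = {p 0, p 1, p 2, p 3, p 4} := by
    refine (Finset.eq_of_subset_of_card_le ?_ ?_).symm
    · intro x hx
      simp only [Finset.mem_insert, Finset.mem_singleton] at hx
      rcases hx with hq | hq | hq | hq | hq <;> rw [hq]
      · exact hm 0 (by omega)
      · exact hm 1 (by omega)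
      · exact hm 2 (by omega)
      · exact hm 3 (by omega)
      · exact hm 4 (by omega)
    · have hc5 : ({p 0, p 1, p 2, p 3, p 4} : Finset α).card = 5 := by
        rw [Finset.card_insert_of_notMem (by
            simp only [Finset.mem_insert, Finset.mem_singleton, not_or]
            exact ⟨dist 0 1 (by omega) (by omega), dist 0 2 (by omega) (by omega),
              dist 0 3 (by omega) (by omega), dist 0 4 (by omega) (by omega)⟩),
          Finset.card_insert_of_notMem (by
            simp only [Finset.mem_insert, Finset.mem_singleton, not_or]
            exact ⟨dist 1 2 (by omega) (by omega), dist 1 3 (by omega) (by omega),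
              dist 1 4 (by omega) (by omega)⟩),
          Finset.card_insert_of_notMem (by
            simp only [Finset.mem_insert, Finset.mem_singleton, not_or]
            exact ⟨dist 2 3 (by omega) (by omega), dist 2 4 (by omega) (by omega)⟩),
          Finset.card_insert_of_notMem (by
            simp only [Finset.mem_singleton]
            exact dist 3 4 (by omega) (by omega)),
          Finset.card_singleton]
      omega
  -- support of h'
  have hsub : h'.support ⊆ ({p 0, p 1, p 3} : Finset α) := by
    intro x hx
    have hx5 : x ∈ ({p 0, p 1, p 2, p 3, p 4} : Finset α) := by
      have h2 : h'.support ⊆ (τ * h * τ⁻¹).support ∪ h⁻¹.support := by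
        rw [hh']
        intro y hy
        have := Perm.support_mul_le (τ * h * τ⁻¹) h⁻¹ hy
        rwa [Finset.sup_eq_union] at this
      rcases Finset.mem_union.mp (h2 hx) with hx1 | hx1
      · rw [Perm.support_conj] at hx1
        obtain ⟨y, hy, rfl⟩ := Finset.mem_map.mp hx1
        rw [hsupp] at hy
        simp only [Finset.mem_insert, Finset.mem_singleton] at hy ⊢
        simp only [Equiv.toEmbedding_apply]
        rcases hy with hq | hq | hq | hq | hq <;> rw [hq]
        · rw [cyc_fst (dist 0 1 (by omega) (by omega)) (dist 1 2 (by omega) (by omega))]; tauto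
        · rw [cyc_snd]; tauto
        · rw [cyc_trd (dist 0 2 (by omega) (by omega)) (dist 1 2 (by omega) (by omega))]; tauto
        · rw [cyc_fix ne30 ne31 ne32]; tauto
        · rw [cyc_fix ne40 ne41 ne42]; tauto
      · rw [Perm.support_inv, hsupp] at hx1
        simp only [Finset.mem_insert, Finset.mem_singleton] at hx1 ⊢
        tauto
    have hx2 : x ≠ p 2 := fun hxe => Perm.mem_support.mp hx (by rw [hxe, h'2])
    have hx4 : x ≠ p 4 := fun hxe => Perm.mem_support.mp hx (by rw [hxe, h'4])
    simp only [Finset.mem_insert, Finset.mem_singleton] at hx5 ⊢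
    tauto
  have hcard3 : h'.support.card ≤ 3 := by
    calc h'.support.card ≤ ({p 0, p 1, p 3} : Finset α).card := Finset.card_le_card hsub
      _ ≤ 3 := by
        refine (Finset.card_insert_le _ _).trans (Nat.succ_le_succ ?_)
        exact (Finset.card_insert_le _ _).trans (by simp)
  have h'1 : h' ≠ 1 := by
    intro heq
    rw [heq] at h'0
    simp only [Perm.one_apply] at h'0
    exact dist 0 1 (by omega) (by omega) h'0
  exact ⟨h', hh'N, small3 h'1 ((mem_alternatingGroup).mp (hNA hh'N)) hcard3⟩


theorem exists_threeCycle_mem (h5 : 5 ≤ Fintype.card α)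
    (N : Subgroup (Perm α)) (hNA : N ≤ alternatingGroup α)
    (hN : ∀ τ, τ ∈ alternatingGroup α → ∀ f ∈ N, τ * f * τ⁻¹ ∈ N)
    {g : Perm α} (hg : g ∈ N) (hg1 : g ≠ 1) :
    ∃ f ∈ N, IsThreeCycle f := by
  -- find a nontrivial element of N with support of size ≤ 5
  have hsmall : ∃ h ∈ N, h ≠ 1 ∧ h.support.card ≤ 5 := by
    obtain ⟨a, ha⟩ : ∃ a, g a ≠ a := by
      by_contra hc; push_neg at hc; exact hg1 (Equiv.ext fun x => by simp [hc x])
    set b := g a with hb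
    have hab : a ≠ b := fun h => ha h.symm
    by_cases hall : ∀ c, c ∉ ({a, b, g b} : Finset α) → g c = c
    · refine ⟨g, hg, hg1, ?_⟩
      have : g.support ⊆ {a, b, g b} := by
        intro x hx
        rw [Perm.mem_support] at hx
        by_contra hc
        exact hx (hall x hc)
      calc g.support.card ≤ ({a, b, g b} : Finset α).card := Finset.card_le_card this
        _ ≤ 5 := by
          refine (Finset.card_insert_le _ _).trans ?_
          refine Nat.succ_le_succ ((Finset.card_insert_le _ _).trans ?_)
          simp
    · push_neg at hall
      obtain ⟨c, hcmem, hgc⟩ := hall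
      simp only [Finset.mem_insert, Finset.mem_singleton, not_or] at hcmem
      obtain ⟨hca, hcb, hcgb⟩ := hcmem
      set τ := cyc a b c with hτ
      have hτ3 : IsThreeCycle τ := cyc_isThreeCycle hab (Ne.symm hca) (Ne.symm hcb)
      set h := g * τ * g⁻¹ * τ⁻¹ with hh
      have hhN : h ∈ N := by
        have h1 : τ * g⁻¹ * τ⁻¹ ∈ N := hN τ hτ3.mem_alternatingGroup g⁻¹ (inv_mem hg)
        have h2 : g * (τ * g⁻¹ * τ⁻¹) ∈ N := mul_mem hg h1
        have hhe : h = g * (τ * g⁻¹ * τ⁻¹) := by rw [hh]; group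
        rw [hhe]; exact h2
      refine ⟨h, hhN, ?_, ?_⟩
      · -- h a = c
        intro h1
        have hgia : g⁻¹ c ≠ a := fun hx => hcb (by
          have := congrArg g hx
          rwa [Perm.coe_inv, Equiv.apply_symm_apply] at this)
        have hgib : g⁻¹ c ≠ b := fun hx => hcgb (by
          have := congrArg g hx
          rwa [Perm.coe_inv, Equiv.apply_symm_apply] at this)
        have hgic : g⁻¹ c ≠ c := fun hx => hgc (by
          have := congrArg g hx
          rw [Perm.coe_inv, Equiv.apply_symm_apply] at this
          exact this.symm)
        have hac : h a = c := by
          have h1 : τ⁻¹ a = c := cyc_inv_trd (Ne.symm hca) (Ne.symm hcb)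
          have h2 : τ (g⁻¹ c) = g⁻¹ c := cyc_fix hgia hgib hgic
          simp only [hh, Perm.mul_apply, h1, h2]
          exact Equiv.apply_symm_apply g c
        rw [h1] at hac
        simp only [Perm.one_apply] at hac
        exact hca hac.symm
      · -- support bound
        have hsub : h.support ⊆ ({a, b, c, g b, g c} : Finset α) := by
          rw [hh]
          refine (Perm.support_mul_le _ _).trans ?_
          intro x hx
          rw [Finset.sup_eq_union, Finset.mem_union] at hx
          rcases hx with hx | hx
          · rw [Perm.support_conj] at hx
            obtain ⟨y, hy, rfl⟩ := Finset.mem_map.mp hx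
            have := cyc_support hy
            simp only [Finset.mem_insert, Finset.mem_singleton] at this ⊢
            rcases this with rfl | rfl | rfl
            · exact Or.inr (Or.inl rfl)
            · exact Or.inr (Or.inr (Or.inr (Or.inl rfl)))
            · exact Or.inr (Or.inr (Or.inr (Or.inr rfl)))
          · rw [Perm.support_inv] at hx
            have := cyc_support hx
            simp only [Finset.mem_insert, Finset.mem_singleton] at this ⊢
            tauto
        calc h.support.card ≤ _ := Finset.card_le_card hsub
          _ ≤ 5 := by
            refine (Finset.card_insert_le _ _).trans (Nat.succ_le_succ ?_)
            refine (Finset.card_insert_le _ _).trans (Nat.succ_le_succ ?_)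
            refine (Finset.card_insert_le _ _).trans (Nat.succ_le_succ ?_)
            exact (Finset.card_insert_le _ _).trans (by simp)
  obtain ⟨h, hhN, hh1, hhc⟩ := hsmall
  have hsign : Perm.sign h = 1 := (mem_alternatingGroup).mp (hNA hhN)
  rcases class5 hh1 hsign hhc with hct | hct | hct
  · exact ⟨h, hhN, hct⟩
  · exact case22 h5 N hNA hN hhN hct
  · exact case5 h5 N hNA hN hhN hct


theorem hom_triv_of_card_lt {m : ℕ} (hm : 5 ≤ m) {X : Type*} [Fintype X]
    (ψ : alternatingGroup (Fin m) →* Equiv.Perm X) (hX : Fintype.card X < m) :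
    ∀ g, ψ g = 1 := by
  classical
  classical
  have h5 : 5 ≤ Fintype.card (Fin m) := by simpa using hm
  have hker : ψ.ker = ⊤ := by
    rcases eq_or_ne ψ.ker ⊥ with hb | hb
    · exfalso
      have hinj : Function.Injective ψ := (MonoidHom.ker_eq_bot_iff ψ).mp hb
      have hcard := Fintype.card_le_of_injective ψ hinj
      rw [Fintype.card_perm] at hcard
      haveI : Nontrivial (Fin m) := ⟨⟨⟨0, by omega⟩, ⟨1, by omega⟩, by simp [Fin.ext_iff]⟩⟩
      have h2 : 2 * Fintype.card (alternatingGroup (Fin m)) = Nat.factorial m := by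
        have := two_mul_card_alternatingGroup (α := Fin m)
        rwa [Fintype.card_perm, Fintype.card_fin] at this
      have hfle : Nat.factorial (Fintype.card X) ≤ Nat.factorial (m - 1) :=
        Nat.factorial_le (by omega)
      have hm' : Nat.factorial m = m * Nat.factorial (m - 1) := by
        conv_lhs => rw [show m = (m - 1) + 1 by omega]
        rw [Nat.factorial_succ]
        congr 2
        omega
      have hpos : 0 < Nat.factorial (m - 1) := Nat.factorial_pos _
      have : m * Nat.factorial (m - 1) ≤ 2 * Nat.factorial (m - 1) := by
        calc m * Nat.factorial (m - 1) = Nat.factorial m := hm'.symm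
          _ = 2 * Fintype.card (alternatingGroup (Fin m)) := h2.symm
          _ ≤ 2 * Nat.factorial (Fintype.card X) := by omega
          _ ≤ 2 * Nat.factorial (m - 1) := by omega
      have hle2 : m ≤ 2 := Nat.le_of_mul_le_mul_right this hpos
      omega
    · -- kernel nontrivial : contains a 3-cycle, hence is everything
      obtain ⟨a, ha1⟩ := Subgroup.ne_bot_iff_exists_ne_one.mp hb
      set K : Subgroup (Perm (Fin m)) :=
        ψ.ker.map (alternatingGroup (Fin m)).subtype with hK
      have hKA : K ≤ alternatingGroup (Fin m) := by
        rintro x ⟨n, hn, rfl⟩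
        exact n.2
      have hKN : ∀ τ, τ ∈ alternatingGroup (Fin m) → ∀ f ∈ K, τ * f * τ⁻¹ ∈ K := by
        rintro τ hτ f ⟨n, hn, rfl⟩
        refine ⟨⟨τ, hτ⟩ * n * ⟨τ, hτ⟩⁻¹, ?_, rfl⟩
        exact (MonoidHom.normal_ker ψ).conj_mem n hn ⟨τ, hτ⟩
      have hgK : ((a : alternatingGroup (Fin m)) : Perm (Fin m)) ∈ K :=
        ⟨(a : alternatingGroup (Fin m)), a.2, rfl⟩
      have hg1 : ((a : alternatingGroup (Fin m)) : Perm (Fin m)) ≠ 1 := by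
        intro hx
        apply ha1
        have : (a : alternatingGroup (Fin m)) = 1 := Subtype.ext hx
        exact Subtype.ext this
      obtain ⟨f, hfK, hf3⟩ := exists_threeCycle_mem h5 K hKA hKN hgK hg1
      obtain ⟨n0, hn0, hcoe⟩ := hfK
      have hmem : (⟨f, hf3.mem_alternatingGroup⟩ : alternatingGroup (Fin m)) ∈ ψ.ker := by
        have : n0 = ⟨f, hf3.mem_alternatingGroup⟩ := Subtype.ext hcoe
        rwa [← this]
      have htop := hf3.alternating_normalClosure (by rw [Nat.card_eq_fintype_card]; exact h5)
      rw [eq_top_iff, ← htop]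
      refine Subgroup.normalClosure_le_normal ?_
      rw [Set.singleton_subset_iff]
      exact hmem
  intro g
  exact MonoidHom.mem_ker.mp (hker ▸ Subgroup.mem_top g)


end AltAux

open SimpleGraph

namespace TreeAux

open AltAux in
theorem hom_triv_of_card_lt {m : ℕ} (hm : 5 ≤ m) {X : Type*} [Fintype X]
    (ψ : alternatingGroup (Fin m) →* Equiv.Perm X) (hX : Fintype.card X < m) :
    ∀ g, ψ g = 1 := AltAux.hom_triv_of_card_lt hm ψ hX

variable {V : Type*} [Fintype V] [DecidableEq V] {T : SimpleGraph V} [DecidableRel T.Adj]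

lemma internal_deg {u v : V} (p : T.Walk u v) :
    p.IsPath → ∀ w ∈ p.support, w ≠ u → w ≠ v → 2 ≤ T.degree w := by
  induction p with
  | nil =>
    intro _ w hw hwu _
    simp only [SimpleGraph.Walk.support_nil, List.mem_singleton] at hw
    exact absurd hw hwu
  | @cons u x v hadj q ih =>
    intro hp w hw hwu hwv
    rw [SimpleGraph.Walk.cons_isPath_iff] at hp
    obtain ⟨hq, hu⟩ := hp
    rw [SimpleGraph.Walk.support_cons, List.mem_cons] at hw
    rcases hw with rfl | hw
    · exact absurd rfl hwu
    by_cases hwx : w = x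
    · subst hwx
      cases q with
      | nil => exact absurd rfl hwv
      | @cons _ y _ hxy q' =>
        have hy : y ∈ (SimpleGraph.Walk.cons hxy q').support := by
          rw [SimpleGraph.Walk.support_cons]
          exact List.mem_cons_of_mem _ q'.start_mem_support
        have huy : u ≠ y := fun he => hu (he ▸ hy)
        have hsub : ({u, y} : Finset V) ⊆ T.neighborFinset w := by
          intro z hz
          rcases Finset.mem_insert.mp hz with rfl | hz
          · exact (T.mem_neighborFinset _ _).mpr hadj.symm
          · rw [Finset.mem_singleton] at hz
            subst hz
            exact (T.mem_neighborFinset _ _).mpr hxy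
        calc 2 = ({u, y} : Finset V).card := (Finset.card_pair huy).symm
          _ ≤ _ := Finset.card_le_card hsub
    · exact ih hq w hw hwx hwv

lemma exists_two_le_degree (hT : T.IsTree) (h3 : 3 ≤ Fintype.card V) :
    ∃ v, 2 ≤ T.degree v := by
  by_contra hc
  push_neg at hc
  have hsum := T.sum_degrees_eq_twice_card_edges
  have hedges := hT.card_edgeFinset
  have hle : ∑ v, T.degree v ≤ Fintype.card V * 1 :=
    Finset.sum_le_card_nsmul _ _ 1 (fun v _ => Nat.lt_succ_iff.mp (hc v))
  omega

lemma exists_degree_le_one (hT : T.IsTree) (h2 : 2 ≤ Fintype.card V) :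
    ∃ v, T.degree v ≤ 1 := by
  by_contra hc
  push_neg at hc
  have hsum := T.sum_degrees_eq_twice_card_edges
  have hedges := hT.card_edgeFinset
  have hle : Fintype.card V * 2 ≤ ∑ v, T.degree v := by
    have := Finset.card_nsmul_le_sum Finset.univ (fun v => T.degree v) 2
      (fun v _ => hc v)
    simpa [Finset.card_univ] using this
  omega

lemma reachable_induce {s : Set V} :
    ∀ {u v : V} (p : T.Walk u v), (∀ w ∈ p.support, w ∈ s) →
      ∀ (hu : u ∈ s) (hv : v ∈ s), (T.induce s).Reachable ⟨u, hu⟩ ⟨v, hv⟩ := by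
  intro u v p
  induction p with
  | nil => intro _ hu hv; rfl
  | @cons u x v hadj q ih =>
    intro hs hu hv
    have hmem : ∀ w ∈ q.support, w ∈ (SimpleGraph.Walk.cons hadj q).support := by
      intro w hw
      rw [SimpleGraph.Walk.support_cons]
      exact List.mem_cons_of_mem _ hw
    have hx : x ∈ s := hs x (hmem x q.start_mem_support)
    have h1 : (T.induce s).Adj ⟨u, hu⟩ ⟨x, hx⟩ := hadj
    exact h1.reachable.trans (ih (fun w hw => hs w (hmem w hw)) hx hv)

lemma isAcyclic_induce (ha : T.IsAcyclic) (s : Set V) : (T.induce s).IsAcyclic := by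
  intro v c hc
  have emb : T.induce s ↪g T := SimpleGraph.Embedding.induce s
  exact ha (c.map emb.toHom) (hc.map emb.injective)


end TreeAux

namespace TreeAux

/-- restriction of a permutation action to an invariant set -/
def restrictPerm {V : Type*} {G : Type*} [Group G] (φ : G →* Equiv.Perm V) (s : Set V)
    (h : ∀ g x, x ∈ s ↔ φ g x ∈ s) : G →* Equiv.Perm s where
  toFun g := Equiv.Perm.subtypePerm (φ g) (fun x => (h g x).symm)
  map_one' := by
    ext x
    simp [Equiv.Perm.subtypePerm_apply]
  map_mul' a b := by
    ext x
    simp [Equiv.Perm.subtypePerm_apply]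
    rfl

lemma restrictPerm_apply {V : Type*} {G : Type*} [Group G] (φ : G →* Equiv.Perm V) (s : Set V)
    (h : ∀ g x, x ∈ s ↔ φ g x ∈ s) (g : G) (x : s) :
    (restrictPerm φ s h g x : V) = φ g x := rfl

section Act

variable {V : Type} [Fintype V] {T : SimpleGraph V} {m : ℕ}
variable {φ : alternatingGroup (Fin m) →* Equiv.Perm V}

lemma ncard_eq_degree [DecidableRel T.Adj] (v : V) :
    (T.neighborSet v).ncard = T.degree v := by
  rw [← Nat.card_coe_set_eq, Nat.card_eq_fintype_card, card_neighborSet_eq_degree]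

lemma deg_eq [DecidableEq V] [DecidableRel T.Adj]
    (hadj : ∀ g v w, T.Adj v w ↔ T.Adj (φ g v) (φ g w)) (g : alternatingGroup (Fin m)) (v : V) :
    T.degree (φ g v) = T.degree v := by
  have himg : T.neighborFinset (φ g v) = (T.neighborFinset v).image (φ g) := by
    ext w
    simp only [mem_neighborFinset, Finset.mem_image]
    constructor
    · intro hw
      refine ⟨(φ g)⁻¹ w, ?_, by simp⟩
      have h2 := hadj g v ((φ g)⁻¹ w)
      rw [show φ g ((φ g)⁻¹ w) = w by simp] at h2
      exact h2.mpr hw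
    · rintro ⟨u, hu, rfl⟩
      exact (hadj g v u).mp hu
  rw [degree, degree, himg, Finset.card_image_of_injective _ (φ g).injective]

end Act

theorem fixed_all (m : ℕ) (hm : 5 ≤ m) :
    ∀ (n : ℕ) (V : Type) [Fintype V] (T : SimpleGraph V), T.IsTree →
      ∀ (φ : alternatingGroup (Fin m) →* Equiv.Perm V),
      (∀ g v w, T.Adj v w ↔ T.Adj (φ g v) (φ g w)) →
      (∀ v : V, (T.neighborSet v).ncard < m) →
      Fintype.card V ≤ n → ∀ g v, φ g v = v := by
  intro n
  induction n with
  | zero =>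
    intro V _ T hT φ hadj hdeg hcard g v
    exact ((Fintype.card_eq_zero_iff.mp (Nat.le_zero.mp hcard)).elim v)
  | succ n ih =>
    intro V _ T hT φ hadj hdeg hcard g v
    letI : DecidableEq V := Classical.decEq V
    letI : DecidableRel T.Adj := fun a b => Classical.dec _
    by_cases hsmall : Fintype.card V ≤ 2
    · have htriv := hom_triv_of_card_lt hm φ (lt_of_le_of_lt hsmall (by omega))
      rw [htriv g]
      rfl
    · push_neg at hsmall
      have h3 : 3 ≤ Fintype.card V := hsmall
      set s : Set V := {x | 2 ≤ T.degree x} with hs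
      have hinv : ∀ g x, x ∈ s ↔ φ g x ∈ s := by
        intro g x
        simp only [hs, Set.mem_setOf_eq, deg_eq hadj]
      set φ' := restrictPerm φ s hinv with hφ'
      set T' := T.induce s with hT'def
      letI : DecidableRel T'.Adj := fun a b => Classical.dec _
      -- membership of path supports
      have hsupp_mem : ∀ (u v : V), u ∈ s → v ∈ s → ∀ (p : T.Walk u v), p.IsPath →
          ∀ w ∈ p.support, w ∈ s := by
        intro u v hu hv p hp w hw
        by_cases hwu : w = u
        · rwa [hwu]
        by_cases hwv : w = v
        · rwa [hwv]
        exact internal_deg p hp w hw hwu hwv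
      -- T' is a tree
      have hT' : T'.IsTree := by
        constructor
        · rw [connected_iff]
          constructor
          · rintro ⟨u, hu⟩ ⟨v', hv'⟩
            obtain ⟨p⟩ := hT.isConnected.preconnected u v'
            exact reachable_induce (p.toPath : T.Walk u v')
              (fun w hw => hsupp_mem u v' hu hv' _ p.toPath.2 w hw) hu hv'
          · obtain ⟨w, hw⟩ := exists_two_le_degree hT h3
            exact ⟨⟨w, hw⟩⟩
        · exact isAcyclic_induce hT.IsAcyclic s
      letI : Fintype ↥s := (Set.toFinite s).fintype
      have hadj' : ∀ g a b, T'.Adj a b ↔ T'.Adj (φ' g a) (φ' g b) := by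
        intro g a b
        exact hadj g ↑a ↑b
      have hdeg' : ∀ w : ↥s, (T'.neighborSet w).ncard < m := by
        intro w
        have hle : T'.degree w ≤ T.degree ↑w := by
          rw [degree, degree]
          refine Finset.card_le_card_of_injOn (fun a => (a : V)) ?_ ?_
          · intro a haa
            simp only [Finset.mem_coe, mem_neighborFinset] at haa ⊢
            exact haa
          · intro a _ b _ hab
            exact Subtype.ext hab
        have h1 : (T'.neighborSet w).ncard = T'.degree w := ncard_eq_degree (T := T') w
        have h2 : (T.neighborSet ↑w).ncard = T.degree ↑w := ncard_eq_degree (T := T) ↑w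
        have h3' := hdeg ↑w
        omega
      have hcard' : Fintype.card ↥s ≤ n := by
        have hlt : Fintype.card ↥s < Fintype.card V := by
          obtain ⟨v0, hv0⟩ := exists_degree_le_one hT (by omega)
          have hv0s : v0 ∉ s := by
            simp only [hs, Set.mem_setOf_eq, not_le]
            omega
          exact Fintype.card_lt_of_injective_of_notMem (fun a : ↥s => (a : V))
            (fun a b hab => Subtype.ext hab)
            (by rintro ⟨⟨a, ha⟩, rfl⟩; exact hv0s ha)
        omega
      have hfix := ih ↥s T' hT' φ' hadj' hdeg' hcard'
      have hSfix : ∀ x, x ∈ s → ∀ g', φ g' x = x := by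
        intro x hx g'
        exact congrArg Subtype.val (hfix g' ⟨x, hx⟩)
      have hclose : ∀ x, (∀ g', φ g' x = x) → ∀ y, T.Adj x y → ∀ g', φ g' y = y := by
        intro x hx y hxy g'
        have hinvN : ∀ g0 w, w ∈ T.neighborSet x ↔ φ g0 w ∈ T.neighborSet x := by
          intro g0 w
          constructor
          · intro hw
            have := (hadj g0 x w).mp hw
            rwa [hx g0] at this
          · intro hw
            rw [← hx g0] at hw
            exact (hadj g0 x w).mpr hw
        have hcd : Fintype.card ↥(T.neighborSet x) < m := by
          rw [← Nat.card_eq_fintype_card, Nat.card_coe_set_eq]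
          exact hdeg x
        have htriv := hom_triv_of_card_lt hm (restrictPerm φ _ hinvN) hcd
        have happ := congrArg Subtype.val
          (congrFun (congrArg (fun (e : Equiv.Perm ↥(T.neighborSet x)) => (e : ↥(T.neighborSet x) → ↥(T.neighborSet x))) (htriv g')) ⟨y, hxy⟩)
        exact happ
      have hwalk : ∀ {a b : V} (p : T.Walk a b), (∀ g', φ g' a = a) → ∀ g', φ g' b = b := by
        intro a b p
        induction p with
        | nil => exact id
        | cons h q ihq => exact fun ha => ihq (hclose _ ha _ h)
      obtain ⟨u0, hu0⟩ := exists_two_le_degree hT h3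
      obtain ⟨p⟩ := hT.isConnected.preconnected u0 v
      exact hwalk p (hSfix u0 hu0) g


end TreeAux

/-- If the alternating group on `m ≥ 5` letters acts faithfully by graph automorphisms
on a finite tree `T`, then `T` has a vertex of degree at least `m`. -/
theorem statement15 {V : Type} [Fintype V] (T : SimpleGraph V) (hT : T.IsTree)
    (m : ℕ) (hm : 5 ≤ m)
    (φ : alternatingGroup (Fin m) →* Equiv.Perm V)
    (hinj : Function.Injective φ)
    (hadj : ∀ g : alternatingGroup (Fin m), ∀ v w : V, T.Adj v w ↔ T.Adj (φ g v) (φ g w)) :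
    ∃ v : V, m ≤ (T.neighborSet v).ncard := by
  by_contra hcon
  push_neg at hcon
  have hfix := TreeAux.fixed_all m hm (Fintype.card V) V T hT φ hadj hcon le_rfl
  haveI : Nontrivial (alternatingGroup (Fin m)) :=
    alternatingGroup.nontrivial_of_three_le_card (α := Fin m)
      (by rw [Nat.card_eq_fintype_card, Fintype.card_fin]; omega)
  obtain ⟨g, hg1⟩ := exists_ne (1 : alternatingGroup (Fin m))
  apply hg1
  apply hinj
  have hone : φ g = 1 := Equiv.ext fun x => by
    rw [hfix g x]; rfl
  rw [hone, map_one]
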